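/- Let T be a finite tree in which every vertex has odd degree, and let v be an active vertex of T (fewer than (deg_T(v)-1)/2 of its neighbours are leaves). Let t be the maximum number of vertices in a path of active vertices starting at v. Then v is t-stable, i.e., for every s ≥ t with the same parity as t, ξ_{s+2}(v) = ξ_s(v). -/

import Mathlib

open SimpleGraph Set

variable {V : Type*}

/-- The majority-dynamics process generated by the initial opinion vector `σ`:
`ξ (t+1) v` is the sign of the sum of the opinions `ξ t` over the neighbours of `v`. -/
noncomputable def dyn (G : SimpleGraph V) (σ : V → ℤ) : ℕ → V → ℤ
  | 0 => σ
  | t + 1 => fun v => if 0 < ∑ᶠ u ∈ G.neighborSet v, dyn G σ t u then 1 else -1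

/-- `σ` is a valid vector of opinions, i.e. takes values in `{-1, 1}`. -/
def PM (σ : V → ℤ) : Prop := ∀ v, σ v = 1 ∨ σ v = -1

/-- The degree of a vertex. -/
noncomputable def degree' (G : SimpleGraph V) (v : V) : ℕ := (G.neighborSet v).ncard

/-- A leaf is a vertex of degree 1. -/
def IsLeaf (G : SimpleGraph V) (v : V) : Prop := degree' G v = 1

/-- The number of neighbours of `v` that are leaves. -/
noncomputable def leafNbrs (G : SimpleGraph V) (v : V) : ℕ := {u | G.Adj v u ∧ IsLeaf G u}.ncard

/-- All degrees of `G` are odd. -/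
def OddDegrees (G : SimpleGraph V) : Prop := ∀ v, Odd (degree' G v)

/-- `v` is `t`-stable for the process `ξ`. -/
def Stable (ξ : ℕ → V → ℤ) (v : V) (t : ℕ) : Prop :=
  ∀ s, t ≤ s → s % 2 = t % 2 → ξ (s + 2) v = ξ s v

/-- A vertex is active if strictly fewer than `(deg v - 1)/2` of its neighbours are leaves. -/
noncomputable def Active (G : SimpleGraph V) (v : V) : Prop :=
  2 * leafNbrs G v < degree' G v - 1

/- ===================== auxiliary material ===================== -/

section Aux

open Finset
open scoped Classical

/-- Generic ±1 facts -/
lemma pm_mul {a b : ℤ} (ha : a = 1 ∨ a = -1) (hb : b = 1 ∨ b = -1) :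
    a * b = 1 ∨ a * b = -1 := by
  rcases ha with rfl | rfl <;> rcases hb with rfl | rfl <;> norm_num

lemma pm_ne_iff {a b : ℤ} (ha : a = 1 ∨ a = -1) (hb : b = 1 ∨ b = -1) :
    a ≠ b ↔ a = -b := by
  rcases ha with rfl | rfl <;> rcases hb with rfl | rfl <;> norm_num

lemma pm_mul_eq_neg_one {a x : ℤ} (ha : a = 1 ∨ a = -1) :
    a * x = -1 ↔ x = -a := by
  rcases ha with rfl | rfl <;> constructor <;> intro h <;> linarith

lemma pm_mul_self {a : ℤ} (ha : a = 1 ∨ a = -1) : a * a = 1 := by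
  rcases ha with rfl | rfl <;> norm_num

lemma pm_ne_neg_self {a : ℤ} (ha : a = 1 ∨ a = -1) : a ≠ -a := by
  rcases ha with rfl | rfl <;> norm_num

lemma even_sum_iff (s : Finset V) (f : V → ℤ) (h : ∀ i ∈ s, Odd (f i)) :
    (Even (∑ i ∈ s, f i) ↔ Even s.card) := by
  induction s using Finset.cons_induction with
  | empty => simp
  | cons a s ha ih =>
    rw [Finset.sum_cons, Finset.card_cons, Int.even_add, Nat.even_add_one]
    have h1 : ¬ Even (f a) := by
      rw [← Int.not_odd_iff_even]; exact fun hc => hc (h a (Finset.mem_cons_self a s))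
    have h2 := ih (fun i hi => h i (Finset.mem_cons_of_mem hi))
    tauto

lemma odd_sum (s : Finset V) (f : V → ℤ) (h : ∀ i ∈ s, Odd (f i)) (hc : Odd s.card) :
    Odd (∑ i ∈ s, f i) := by
  rw [← Int.not_even_iff_odd, even_sum_iff s f h, Nat.not_even_iff_odd]
  exact hc

lemma sum_pm_eq (t : Finset V) (g : V → ℤ) (h : ∀ x ∈ t, g x = 1 ∨ g x = -1) :
    ∑ x ∈ t, g x = (t.card : ℤ) - 2 * ((t.filter (fun x => g x = -1)).card : ℤ) := by
  induction t using Finset.cons_induction with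
  | empty => simp
  | cons a s ha ih =>
    rw [Finset.sum_cons, Finset.filter_cons, Finset.card_cons,
      ih (fun i hi => h i (Finset.mem_cons_of_mem hi))]
    rcases h a (Finset.mem_cons_self a s) with h1 | h1
    · rw [h1]; norm_num; push_cast; ring
    · rw [h1, if_pos rfl, Finset.card_cons]
      push_cast; ring

variable [Fintype V] (G : SimpleGraph V) (σ : V → ℤ)

noncomputable def nbr (v : V) : Finset V := (Set.toFinite (G.neighborSet v)).toFinset

lemma mem_nbr {u v : V} : u ∈ nbr G v ↔ G.Adj v u := by
  simp [nbr]

lemma dyn_succ (t : ℕ) (v : V) :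
    dyn G σ (t + 1) v = if 0 < ∑ u ∈ nbr G v, dyn G σ t u then 1 else -1 := by
  have : ∑ᶠ u ∈ G.neighborSet v, dyn G σ t u = ∑ u ∈ nbr G v, dyn G σ t u := by
    rw [← finsum_mem_coe_finset]
    congr 1
    simp [nbr]
  simp only [dyn, this]

lemma dyn_pm (hσ : PM σ) (t : ℕ) : PM (dyn G σ t) := by
  cases t with
  | zero => exact hσ
  | succ t => intro v; rw [dyn_succ]; split <;> simp

lemma degree'_eq (v : V) : degree' G v = (nbr G v).card := by
  rw [degree', Set.ncard_eq_toFinset_card _ (Set.toFinite _)]; rfl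

lemma leafNbrs_eq (v : V) :
    leafNbrs G v = ((nbr G v).filter (fun u => IsLeaf G u)).card := by
  rw [leafNbrs, ← Set.ncard_coe_finset]
  congr 1
  ext u
  simp [mem_nbr]

lemma odd_nbr_sum (hodd : OddDegrees G) (hσ : PM σ) (t : ℕ) (v : V) :
    Odd (∑ u ∈ nbr G v, dyn G σ t u) := by
  refine odd_sum _ _ (fun i _ => ?_) ?_
  · rcases dyn_pm G σ hσ t i with h | h <;> rw [h]
    · exact odd_one
    · exact ⟨-1, by ring⟩
  · rw [← degree'_eq]; exact hodd v

lemma step_iff (hodd : OddDegrees G) (hσ : PM σ) {a : ℤ} (ha : a = 1 ∨ a = -1)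
    (t : ℕ) (v : V) :
    dyn G σ (t + 1) v = a ↔ 1 ≤ a * ∑ u ∈ nbr G v, dyn G σ t u := by
  have hne : (∑ u ∈ nbr G v, dyn G σ t u) ≠ 0 := by
    intro h0
    have := odd_nbr_sum G σ hodd hσ t v
    rw [h0] at this
    exact (Int.not_odd_iff_even.mpr Even.zero) this
  rw [dyn_succ]
  rcases ha with rfl | rfl
  · simp only [one_mul]
    split_ifs with h
    · constructor <;> intro <;> omega
    · constructor
      · intro h1; exact absurd h1 (by norm_num)
      · intro h1; omega
  · simp only [neg_one_mul]
    split_ifs with h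
    · constructor
      · intro h1; exact absurd h1 (by norm_num)
      · intro h1; omega
    · constructor <;> intro <;> omega

lemma leaf_nbr {x u : V} (hleaf : IsLeaf G x) (hadj : G.Adj x u) : nbr G x = {u} := by
  have h1 : (nbr G x).card = 1 := by rw [← degree'_eq]; exact hleaf
  obtain ⟨b, hb⟩ := Finset.card_eq_one.mp h1
  have : u ∈ nbr G x := (mem_nbr G).mpr hadj
  rw [hb] at this ⊢
  simp only [Finset.mem_singleton] at this
  rw [this]

lemma leaf_step (hσ : PM σ) {x u : V} (hleaf : IsLeaf G x) (hadj : G.Adj x u) (t : ℕ) :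
    dyn G σ (t + 1) x = dyn G σ t u := by
  rw [dyn_succ, leaf_nbr G hleaf hadj, Finset.sum_singleton]
  rcases dyn_pm G σ hσ t u with h | h <;> rw [h] <;> norm_num

lemma active_not_leaf {u : V} (h : Active G u) : ¬ IsLeaf G u := by
  intro hl
  rw [Active, hl] at h
  omega

/-- In a tree, a path starting at a neighbour `w'` of `u` (with `w' ≠ v`) that avoids `u`
also avoids the neighbour `v` of `u`. -/
lemma avoid (hT : G.IsTree) {u v w' : V} (huv : G.Adj u v) (huw' : G.Adj u w') (hne : w' ≠ v)
    {x : V} (p : G.Walk w' x) (hp : p.IsPath) (hu : u ∉ p.support) : v ∉ p.support := by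
  intro hv
  have hq : (p.takeUntil v hv).IsPath := hp.takeUntil hv
  have husub : u ∉ (p.takeUntil v hv).support :=
    fun h => hu (Walk.support_takeUntil_subset p hv h)
  have hr : (Walk.cons huw'.symm (Walk.cons huv Walk.nil)).IsPath := by
    rw [Walk.cons_isPath_iff]
    refine ⟨?_, ?_⟩
    · rw [Walk.cons_isPath_iff]
      refine ⟨Walk.IsPath.nil, ?_⟩
      simp [huv.ne]
    · simp [huw'.ne', hne]
  have hunique := hT.IsAcyclic.path_unique ⟨p.takeUntil v hv, hq⟩ ⟨_, hr⟩
  apply husub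
  have hsup : (p.takeUntil v hv).support = (Walk.cons huw'.symm (Walk.cons huv Walk.nil)).support := by
    rw [Subtype.ext_iff] at hunique
    exact congrArg Walk.support hunique
  rw [hsup]
  simp

end Aux

section Main

open Finset
open scoped Classical

variable [Fintype V]

/-- Main inductive lemma: if every active path starting at `u` and avoiding its
non-leaf neighbour `v` has at most `k` vertices, then any flip of `u` at times
`(s, s+2)` with `s ≥ k` forces `u` to copy `v`'s value at time `s+1`. -/
lemma main_flip (G : SimpleGraph V) (hT : G.IsTree) (hodd : OddDegrees G)
    (σ : V → ℤ) (hσ : PM σ) :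
    ∀ k (u v : V), G.Adj u v → ¬ IsLeaf G v →
      (Active G u → ∀ (w : V) (p : G.Walk u w), p.IsPath → (∀ x ∈ p.support, Active G x) →
        v ∉ p.support → p.length + 1 ≤ k) →
      ∀ s, k ≤ s → dyn G σ (s + 2) u ≠ dyn G σ s u → dyn G σ (s + 2) u = dyn G σ (s + 1) v := by
  intro k
  induction k using Nat.strong_induction_on with
  | _ k ih =>
  intro u v hadj hvl hbound s hks hflip
  by_cases hul : IsLeaf G u
  · exact leaf_step G σ hσ hul hadj (s + 1)
  -- notation
  set a := dyn G σ s u with ha_def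
  have hapm : a = 1 ∨ a = -1 := dyn_pm G σ hσ s u
  have hnegpm : -a = 1 ∨ -a = -1 := by rcases hapm with h | h <;> rw [h] <;> norm_num
  have haneg : dyn G σ (s + 2) u = -a :=
    (pm_ne_iff (dyn_pm G σ hσ (s + 2) u) hapm).mp hflip
  have hS1 : 1 ≤ (-a) * ∑ x ∈ nbr G u, dyn G σ (s + 1) x :=
    (step_iff G σ hodd hσ hnegpm (s + 1) u).mp haneg
  have hS1' : a * ∑ x ∈ nbr G u, dyn G σ (s + 1) x ≤ -1 := by
    rw [neg_mul] at hS1; omega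
  rw [haneg]
  by_contra hvne
  have hva : dyn G σ (s + 1) v = a := by
    have := (pm_ne_iff (dyn_pm G σ hσ (s + 1) v) hnegpm).mp (fun h => hvne h.symm)
    rwa [neg_neg] at this
  by_cases hact : Active G u
  · -- active case
    have hk1 : 1 ≤ k := by
      have := hbound hact u Walk.nil Walk.IsPath.nil
        (by intro x hx; simp only [Walk.support_nil, List.mem_singleton] at hx; rw [hx]; exact hact)
        (by simp [hadj.ne'])
      simpa using this
    have hs1 : 1 ≤ s := le_trans hk1 hks
    have e1 : s - 1 + 2 = s + 2 - 1 := by omega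
    have e2 : s - 1 + 1 = s := by omega
    have e3 : s - 1 + 2 = s + 1 := by omega
    -- the ±1 function at time s+1
    have hg1 : ∀ x ∈ nbr G u, a * dyn G σ (s + 1) x = 1 ∨ a * dyn G σ (s + 1) x = -1 :=
      fun x _ => pm_mul hapm (dyn_pm G σ hσ (s + 1) x)
    have hsum1 : a * ∑ x ∈ nbr G u, dyn G σ (s + 1) x
        = ((nbr G u).card : ℤ) - 2 * (((nbr G u).filter
            (fun x => a * dyn G σ (s + 1) x = -1)).card : ℤ) := by
      rw [Finset.mul_sum]
      exact sum_pm_eq _ _ hg1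
    set B := (nbr G u).filter (fun x => a * dyn G σ (s + 1) x = -1) with hB_def
    -- every member of B did not flip between s-1 and s+1
    have hBx : ∀ x ∈ B, a * dyn G σ (s - 1) x = -1 := by
      intro x hx
      obtain ⟨hxN, hxval⟩ := Finset.mem_filter.mp hx
      have hxadj : G.Adj u x := (mem_nbr G).mp hxN
      have hxv : dyn G σ (s + 1) x = -a := (pm_mul_eq_neg_one hapm).mp hxval
      have hxnev : x ≠ v := by
        intro h; rw [h, hva] at hxv; exact pm_ne_neg_self hapm hxv
      have hxnl : ¬ IsLeaf G x := by
        intro hxl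
        have := leaf_step G σ hσ hxl hxadj.symm s
        rw [this] at hxv
        exact pm_ne_neg_self hapm hxv
      rw [pm_mul_eq_neg_one hapm]
      by_contra hne2
      have hflipx : dyn G σ (s - 1 + 2) x ≠ dyn G σ (s - 1) x := by
        rw [e3, hxv]
        intro h; exact hne2 h.symm
      have hbound' : Active G x → ∀ (w : V) (p : G.Walk x w), p.IsPath →
          (∀ y ∈ p.support, Active G y) → u ∉ p.support → p.length + 1 ≤ k - 1 := by
        intro hactx w p hp hpact hup
        have hvp : v ∉ p.support := avoid G hT hadj hxadj hxnev p hp hup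
        have hcons : (Walk.cons hxadj p).IsPath := (Walk.cons_isPath_iff hxadj p).mpr ⟨hp, hup⟩
        have hconsact : ∀ y ∈ (Walk.cons hxadj p).support, Active G y := by
          intro y hy
          rw [Walk.support_cons, List.mem_cons] at hy
          rcases hy with rfl | hy
          · exact hact
          · exact hpact y hy
        have hconsv : v ∉ (Walk.cons hxadj p).support := by
          rw [Walk.support_cons, List.mem_cons]
          push_neg
          exact ⟨hadj.ne', hvp⟩
        have := hbound hact w (Walk.cons hxadj p) hcons hconsact hconsv
        rw [Walk.length_cons] at this
        omega
      have := ih (k - 1) (by omega) x u hxadj.symm (active_not_leaf G hact) hbound'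
        (s - 1) (by omega) hflipx
      rw [e3, e2, hxv] at this
      exact pm_ne_neg_self hapm this.symm
    -- time s-1 estimate
    have hS0 : 1 ≤ a * ∑ x ∈ nbr G u, dyn G σ (s - 1) x := by
      refine (step_iff G σ hodd hσ hapm (s - 1) u).mp ?_
      rw [e2]
    have hg0 : ∀ x ∈ nbr G u, a * dyn G σ (s - 1) x = 1 ∨ a * dyn G σ (s - 1) x = -1 :=
      fun x _ => pm_mul hapm (dyn_pm G σ hσ (s - 1) x)
    have hsum0 : a * ∑ x ∈ nbr G u, dyn G σ (s - 1) x
        = ((nbr G u).card : ℤ) - 2 * (((nbr G u).filter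
            (fun x => a * dyn G σ (s - 1) x = -1)).card : ℤ) := by
      rw [Finset.mul_sum]
      exact sum_pm_eq _ _ hg0
    have hsub : B ⊆ (nbr G u).filter (fun x => a * dyn G σ (s - 1) x = -1) := by
      intro x hx
      exact Finset.mem_filter.mpr ⟨(Finset.mem_filter.mp hx).1, hBx x hx⟩
    have hcard := Finset.card_le_card hsub
    rw [hsum1] at hS1'
    rw [hsum0] at hS0
    omega
  · -- inactive (non-leaf) case: direct counting
    exfalso
    set N := nbr G u with hN_def
    set Lf := N.filter (fun x => IsLeaf G x) with hLf_def
    set Os := N.filter (fun x => ¬ IsLeaf G x) with hOs_def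
    have hsplit : ∑ x ∈ N, a * dyn G σ (s + 1) x
        = ∑ x ∈ Lf, a * dyn G σ (s + 1) x + ∑ x ∈ Os, a * dyn G σ (s + 1) x :=
      (Finset.sum_filter_add_sum_filter_not N _ _).symm
    have hleafval : ∀ x ∈ Lf, a * dyn G σ (s + 1) x = 1 := by
      intro x hx
      obtain ⟨hxN, hxl⟩ := Finset.mem_filter.mp hx
      rw [leaf_step G σ hσ hxl ((mem_nbr G).mp hxN).symm s, ← ha_def]
      exact pm_mul_self hapm
    have hLfsum : ∑ x ∈ Lf, a * dyn G σ (s + 1) x = (Lf.card : ℤ) := by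
      rw [Finset.sum_congr rfl hleafval, Finset.sum_const, nsmul_eq_mul, mul_one]
    have hvOs : v ∈ Os := Finset.mem_filter.mpr ⟨(mem_nbr G).mpr hadj, hvl⟩
    have hOssum : (1 : ℤ) - ((Os.card : ℤ) - 1) ≤ ∑ x ∈ Os, a * dyn G σ (s + 1) x := by
      rw [← Finset.add_sum_erase Os _ hvOs, hva, pm_mul_self hapm]
      have hlow : ∀ x ∈ Os.erase v, (-1 : ℤ) ≤ a * dyn G σ (s + 1) x := by
        intro x _
        rcases pm_mul hapm (dyn_pm G σ hσ (s + 1) x) with h | h <;> rw [h] <;> norm_num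
      have := Finset.card_nsmul_le_sum (Os.erase v) _ (-1 : ℤ) hlow
      rw [Finset.card_erase_of_mem hvOs, nsmul_eq_mul] at this
      have hOs1 : 1 ≤ Os.card := Finset.card_pos.mpr ⟨v, hvOs⟩
      push_cast [hOs1] at this
      linarith [this]
    have hcards : Lf.card + Os.card = N.card := Finset.card_filter_add_card_filter_not _
    have hdeg : degree' G u = N.card := degree'_eq G u
    have hlfn : leafNbrs G u = Lf.card := leafNbrs_eq G u
    have hinact : ¬ (2 * leafNbrs G u < degree' G u - 1) := hact
    have hd1 : ¬ (degree' G u = 1) := hul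
    -- combine: a * S1 ≥ 1, contradicting hS1'
    rw [Finset.mul_sum] at hS1'
    rw [hsplit, hLfsum] at hS1'
    have hbig : (1 : ℤ) ≤ (Lf.card : ℤ) + (1 - ((Os.card : ℤ) - 1)) := by
      have : N.card ≤ 2 * Lf.card + 1 := by omega
      have h2 : (N.card : ℤ) ≤ 2 * (Lf.card : ℤ) + 1 := by exact_mod_cast this
      have h3 : (Os.card : ℤ) = (N.card : ℤ) - (Lf.card : ℤ) := by
        have := hcards; push_cast [← this]; ring
      omega
    linarith [hOssum]

end Main

open Finset
open scoped Classical

/-- If `v` is an active vertex of a tree with odd degrees and `t` is the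
maximum number of vertices of a path of active vertices starting at `v`, then `v` is
`t`-stable for any majority dynamics. -/
theorem active_stable [Fintype V] (G : SimpleGraph V) (hT : G.IsTree)
    (hodd : OddDegrees G) (v : V) (hv : Active G v) (t : ℕ)
    (hmax : ∀ (w : V) (p : G.Walk v w), p.IsPath → (∀ x ∈ p.support, Active G x) →
      p.length + 1 ≤ t)
    (hex : ∃ (w : V) (p : G.Walk v w), p.IsPath ∧ (∀ x ∈ p.support, Active G x) ∧
      p.length + 1 = t)
    (σ : V → ℤ) (hσ : PM σ) :
    Stable (dyn G σ) v t := by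
  intro s hs _
  have ht1 : 1 ≤ t := by
    obtain ⟨w, p, hp, hpa, hlen⟩ := hex
    omega
  have hs1 : 1 ≤ s := le_trans ht1 hs
  have e2 : s - 1 + 1 = s := by omega
  have e3 : s - 1 + 2 = s + 1 := by omega
  set a := dyn G σ s v with ha_def
  have hapm : a = 1 ∨ a = -1 := dyn_pm G σ hσ s v
  have hnegpm : -a = 1 ∨ -a = -1 := by rcases hapm with h | h <;> rw [h] <;> norm_num
  by_contra hflip
  have haneg : dyn G σ (s + 2) v = -a :=
    (pm_ne_iff (dyn_pm G σ hσ (s + 2) v) hapm).mp hflip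
  have hS1 : 1 ≤ (-a) * ∑ x ∈ nbr G v, dyn G σ (s + 1) x :=
    (step_iff G σ hodd hσ hnegpm (s + 1) v).mp haneg
  have hS1' : a * ∑ x ∈ nbr G v, dyn G σ (s + 1) x ≤ -1 := by
    rw [neg_mul] at hS1; omega
  have hg1 : ∀ x ∈ nbr G v, a * dyn G σ (s + 1) x = 1 ∨ a * dyn G σ (s + 1) x = -1 :=
    fun x _ => pm_mul hapm (dyn_pm G σ hσ (s + 1) x)
  have hsum1 : a * ∑ x ∈ nbr G v, dyn G σ (s + 1) x
      = ((nbr G v).card : ℤ) - 2 * (((nbr G v).filter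
          (fun x => a * dyn G σ (s + 1) x = -1)).card : ℤ) := by
    rw [Finset.mul_sum]
    exact sum_pm_eq _ _ hg1
  set B := (nbr G v).filter (fun x => a * dyn G σ (s + 1) x = -1) with hB_def
  have hBx : ∀ x ∈ B, a * dyn G σ (s - 1) x = -1 := by
    intro x hx
    obtain ⟨hxN, hxval⟩ := Finset.mem_filter.mp hx
    have hxadj : G.Adj v x := (mem_nbr G).mp hxN
    have hxv : dyn G σ (s + 1) x = -a := (pm_mul_eq_neg_one hapm).mp hxval
    rw [pm_mul_eq_neg_one hapm]
    by_contra hne2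
    have hflipx : dyn G σ (s - 1 + 2) x ≠ dyn G σ (s - 1) x := by
      rw [e3, hxv]
      intro h; exact hne2 h.symm
    have hbound' : Active G x → ∀ (w : V) (p : G.Walk x w), p.IsPath →
        (∀ y ∈ p.support, Active G y) → v ∉ p.support → p.length + 1 ≤ t - 1 := by
      intro _ w p hp hpact hvp
      have hcons : (Walk.cons hxadj p).IsPath := (Walk.cons_isPath_iff hxadj p).mpr ⟨hp, hvp⟩
      have hconsact : ∀ y ∈ (Walk.cons hxadj p).support, Active G y := by
        intro y hy
        rw [Walk.support_cons, List.mem_cons] at hy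
        rcases hy with rfl | hy
        · exact hv
        · exact hpact y hy
      have := hmax w (Walk.cons hxadj p) hcons hconsact
      rw [Walk.length_cons] at this
      omega
    have := main_flip G hT hodd σ hσ (t - 1) x v hxadj.symm (active_not_leaf G hv) hbound'
      (s - 1) (by omega) hflipx
    rw [e3, e2, hxv] at this
    exact pm_ne_neg_self hapm this.symm
  have hS0 : 1 ≤ a * ∑ x ∈ nbr G v, dyn G σ (s - 1) x := by
    refine (step_iff G σ hodd hσ hapm (s - 1) v).mp ?_
    rw [e2]
  have hg0 : ∀ x ∈ nbr G v, a * dyn G σ (s - 1) x = 1 ∨ a * dyn G σ (s - 1) x = -1 :=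
    fun x _ => pm_mul hapm (dyn_pm G σ hσ (s - 1) x)
  have hsum0 : a * ∑ x ∈ nbr G v, dyn G σ (s - 1) x
      = ((nbr G v).card : ℤ) - 2 * (((nbr G v).filter
          (fun x => a * dyn G σ (s - 1) x = -1)).card : ℤ) := by
    rw [Finset.mul_sum]
    exact sum_pm_eq _ _ hg0
  have hsub : B ⊆ (nbr G v).filter (fun x => a * dyn G σ (s - 1) x = -1) := by
    intro x hx
    exact Finset.mem_filter.mpr ⟨(Finset.mem_filter.mp hx).1, hBx x hx⟩
  have hcard := Finset.card_le_card hsub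
  rw [hsum1] at hS1'
  rw [hsum0] at hS0
  omega
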